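/- arXiv:2409.04767 — 2 statements merged into one kernel-verified Lean document; each statement's English description precedes it below -/
import Mathlib

section
/- Let B ∈ ℝ^{n×n} be a nonsingular M-matrix, i.e., all off-diagonal entries of B are less than or equal to zero and all principal minors of B are positive. Then there exists a positive definite diagonal matrix P ∈ ℝ^{n×n} such that PB + BᵀP is positive definite. -/
open Matrix

-- all principal minors positive → det positive
lemma detPos (n : ℕ) (B : Matrix (Fin n) (Fin n) ℝ)
    (hminor : ∀ S : Finset (Fin n),
      0 < (B.submatrix (fun a : {x // x ∈ S} => (a : Fin n))
        (fun a : {x // x ∈ S} => (a : Fin n))).det) : 0 < B.det := by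
  have h := hminor Finset.univ
  let e : {x // x ∈ (Finset.univ : Finset (Fin n))} ≃ Fin n :=
    Equiv.subtypeUnivEquiv (fun x => Finset.mem_univ x)
  rwa [show (fun a : {x // x ∈ (Finset.univ : Finset (Fin n))} => (a : Fin n)) = ⇑e from rfl,
    Matrix.det_submatrix_equiv_self] at h

-- principal-minor condition is inherited by principal submatrices
lemma minorInherit (m n : ℕ) (B : Matrix (Fin n) (Fin n) ℝ) (f : Fin m → Fin n)
    (hf : Function.Injective f)
    (hminor : ∀ S : Finset (Fin n),
      0 < (B.submatrix (fun a : {x // x ∈ S} => (a : Fin n))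
        (fun a : {x // x ∈ S} => (a : Fin n))).det) :
    ∀ S : Finset (Fin m),
      0 < ((B.submatrix f f).submatrix (fun a : {x // x ∈ S} => (a : Fin m))
        (fun a : {x // x ∈ S} => (a : Fin m))).det := by
  intro S
  set T : Finset (Fin n) := S.map ⟨f, hf⟩ with hT
  have hfun : Function.Bijective (fun a : {x // x ∈ S} =>
      (⟨f a, by exact hT ▸ Finset.mem_map_of_mem _ a.2⟩ : {y // y ∈ T})) := by
    constructor
    · intro a b hab
      have : f a = f b := congrArg Subtype.val hab
      exact Subtype.ext (hf this)
    · rintro ⟨y, hy⟩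
      rw [hT, Finset.mem_map] at hy
      obtain ⟨a, ha, rfl⟩ := hy
      exact ⟨⟨a, ha⟩, rfl⟩
  let e := Equiv.ofBijective _ hfun
  have key : (B.submatrix f f).submatrix (fun a : {x // x ∈ S} => (a : Fin m))
      (fun a : {x // x ∈ S} => (a : Fin m))
      = (B.submatrix (fun a : {x // x ∈ T} => (a : Fin n))
        (fun a : {x // x ∈ T} => (a : Fin n))).submatrix e e := by
    ext a b; rfl
  rw [key, Matrix.det_submatrix_equiv_self]
  exact hminor T

lemma invNonneg : ∀ (n : ℕ) (B : Matrix (Fin n) (Fin n) ℝ),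
    (∀ i j : Fin n, i ≠ j → B i j ≤ 0) →
    (∀ S : Finset (Fin n),
      0 < (B.submatrix (fun a : {x // x ∈ S} => (a : Fin n))
        (fun a : {x // x ∈ S} => (a : Fin n))).det) →
    ∀ i j, 0 ≤ B⁻¹ i j := by
  intro n
  induction n with
  | zero => intro B _ _ i; exact i.elim0
  | succ n IH =>
    intro B hoff hminor
    set p : Fin n ⊕ Fin 1 ≃ Fin (n + 1) := finSumFinEquiv with hp
    set C : Matrix (Fin n ⊕ Fin 1) (Fin n ⊕ Fin 1) ℝ := B.submatrix p p with hCdef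
    set A := C.toBlocks₁₁ with hA
    set b := C.toBlocks₁₂ with hb
    set c := C.toBlocks₂₁ with hc
    set d := C.toBlocks₂₂ with hd
    have hC : C = fromBlocks A b c d := (fromBlocks_toBlocks C).symm
    have hAsub : A = B.submatrix (fun i : Fin n => p (Sum.inl i))
        (fun j : Fin n => p (Sum.inl j)) := rfl
    have hfinj : Function.Injective (fun i : Fin n => p (Sum.inl i)) :=
      p.injective.comp Sum.inl_injective
    have hoffA : ∀ i j : Fin n, i ≠ j → A i j ≤ 0 := by
      intro i j hij
      exact hoff _ _ (fun h => hij (Sum.inl_injective (p.injective h)))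
    have hminorA := hAsub ▸ minorInherit n (n+1) B _ hfinj hminor
    have hAinv : ∀ i j, 0 ≤ A⁻¹ i j := IH A hoffA hminorA
    have hAdet : 0 < A.det := detPos n A hminorA
    have instA : Invertible A := A.invertibleOfIsUnitDet (isUnit_iff_ne_zero.mpr hAdet.ne')
    have hinvA : ⅟A = A⁻¹ := invOf_eq_nonsing_inv A
    have hdetC : C.det = B.det := by rw [hCdef, det_submatrix_equiv_self]
    have hdetC' : C.det = A.det * (d - c * ⅟A * b).det := by
      rw [hC]; exact det_fromBlocks₁₁ A b c d
    have hBdet : 0 < B.det := detPos (n+1) B hminor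
    have hsdet : 0 < (d - c * ⅟A * b).det := by
      have h1 : 0 < A.det * (d - c * ⅟A * b).det := by rw [← hdetC', hdetC]; exact hBdet
      nlinarith [hAdet, h1]
    have hs00 : 0 < (d - c * ⅟A * b) 0 0 := by rwa [det_fin_one] at hsdet
    haveI instS : Invertible (d - c * ⅟A * b) :=
      (d - c * ⅟A * b).invertibleOfIsUnitDet (isUnit_iff_ne_zero.mpr hsdet.ne')
    have hinvs : 0 < ⅟(d - c * ⅟A * b) 0 0 := by
      have h1 : ((d - c * ⅟A * b) * ⅟(d - c * ⅟A * b)) 0 0 = 1 := by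
        rw [mul_invOf_self (d - c * ⅟A * b)]; simp
      rw [mul_apply, Fin.sum_univ_one] at h1
      nlinarith [hs00, h1]
    have hbneg : ∀ (i : Fin n) (k : Fin 1), b i k ≤ 0 := by
      intro i k
      exact hoff (p (Sum.inl i)) (p (Sum.inr k))
        (fun h => Sum.inl_ne_inr (p.injective h))
    have hcneg : ∀ (k : Fin 1) (j : Fin n), c k j ≤ 0 := by
      intro k j
      exact hoff (p (Sum.inr k)) (p (Sum.inl j))
        (fun h => Sum.inr_ne_inl (p.injective h))
    have hXneg : ∀ (i : Fin n) (k : Fin 1), (⅟A * b) i k ≤ 0 := by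
      intro i k
      rw [mul_apply]
      apply Finset.sum_nonpos
      intro j _
      have h := hAinv i j
      rw [← hinvA] at h
      exact mul_nonpos_of_nonneg_of_nonpos h (hbneg j k)
    have hYneg : ∀ (k : Fin 1) (j : Fin n), (c * ⅟A) k j ≤ 0 := by
      intro k j
      rw [mul_apply]
      apply Finset.sum_nonpos
      intro i _
      have h := hAinv i j
      rw [← hinvA] at h
      exact mul_nonpos_of_nonpos_of_nonneg (hcneg k i) h
    haveI instFB : Invertible (fromBlocks A b c d) := fromBlocks₁₁Invertible A b c d
    haveI instC : Invertible C := hC ▸ instFB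
    have hCinvEq : C⁻¹ = fromBlocks
        (⅟A + ⅟A * b * ⅟(d - c * ⅟A * b) * c * ⅟A) (-(⅟A * b * ⅟(d - c * ⅟A * b)))
        (-(⅟(d - c * ⅟A * b) * c * ⅟A)) (⅟(d - c * ⅟A * b)) := by
      rw [hC, ← invOf_eq_nonsing_inv, invOf_fromBlocks₁₁_eq]
    have hCnn : ∀ i' j', 0 ≤ C⁻¹ i' j' := by
      have hX0 : ∀ i : Fin n, (⅟A * b) i 0 * ⅟(d - c * ⅟A * b) 0 0 ≤ 0 := fun i =>
        mul_nonpos_of_nonpos_of_nonneg (hXneg i 0) hinvs.le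
      have hXY : ∀ (i j : Fin n),
          0 ≤ (⅟A * b * ⅟(d - c * ⅟A * b) * c * ⅟A) i j := by
        intro i j
        rw [Matrix.mul_assoc (⅟A * b * ⅟(d - c * ⅟A * b)) c ⅟A]
        have h1 : (⅟A * b * ⅟(d - c * ⅟A * b) * (c * ⅟A)) i j
            = (⅟A * b) i 0 * ⅟(d - c * ⅟A * b) 0 0 * (c * ⅟A) 0 j := by
          rw [mul_apply, Fin.sum_univ_one, mul_apply, Fin.sum_univ_one]
        rw [h1]
        nlinarith [hX0 i, hYneg 0 j]
      intro i' j'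
      rw [hCinvEq]
      rcases i' with i | k <;> rcases j' with j | l
      · rw [fromBlocks_apply₁₁, Matrix.add_apply]
        have h := hAinv i j
        rw [← hinvA] at h
        exact add_nonneg h (hXY i j)
      · rw [fromBlocks_apply₁₂, Matrix.neg_apply, Fin.fin_one_eq_zero l]
        have h1 : (⅟A * b * ⅟(d - c * ⅟A * b)) i 0
            = (⅟A * b) i 0 * ⅟(d - c * ⅟A * b) 0 0 := by
          rw [mul_apply, Fin.sum_univ_one]
        rw [h1]
        linarith [hX0 i]
      · rw [fromBlocks_apply₂₁, Matrix.neg_apply, Fin.fin_one_eq_zero k]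
        have h1 : (⅟(d - c * ⅟A * b) * c * ⅟A) 0 j
            = ⅟(d - c * ⅟A * b) 0 0 * (c * ⅟A) 0 j := by
          rw [Matrix.mul_assoc, mul_apply, Fin.sum_univ_one]
        rw [h1]
        have : ⅟(d - c * ⅟A * b) 0 0 * (c * ⅟A) 0 j ≤ 0 :=
          mul_nonpos_of_nonneg_of_nonpos hinvs.le (hYneg 0 j)
        linarith
      · rw [fromBlocks_apply₂₂, Fin.fin_one_eq_zero k, Fin.fin_one_eq_zero l]
        exact hinvs.le
    intro i j
    have hB : B = C.submatrix p.symm p.symm := by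
      rw [hCdef, submatrix_submatrix]
      simp [Equiv.self_comp_symm]
    have hBinv : B⁻¹ = C⁻¹.submatrix p.symm p.symm := by
      rw [hB]; exact inv_submatrix_equiv C p.symm p.symm
    rw [hBinv, submatrix_apply]
    exact hCnn _ _

lemma exPos (n : ℕ) (B : Matrix (Fin n) (Fin n) ℝ)
    (hoff : ∀ i j : Fin n, i ≠ j → B i j ≤ 0)
    (hminor : ∀ S : Finset (Fin n),
      0 < (B.submatrix (fun a : {x // x ∈ S} => (a : Fin n))
        (fun a : {x // x ∈ S} => (a : Fin n))).det) :
    ∃ x : Fin n → ℝ, (∀ i, 0 < x i) ∧ ∀ i, ∑ j, B i j * x j = 1 := by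
  have hdet : 0 < B.det := detPos n B hminor
  have hinv := invNonneg n B hoff hminor
  set x : Fin n → ℝ := B⁻¹ *ᵥ (fun _ => 1) with hx
  have hxnn : ∀ i, 0 ≤ x i := by
    intro i
    show 0 ≤ ∑ j, B⁻¹ i j * (fun _ => (1:ℝ)) j
    exact Finset.sum_nonneg fun j _ => by
      simpa using mul_nonneg (hinv i j) zero_le_one
  have hBx : ∀ i, ∑ j, B i j * x j = 1 := by
    intro i
    have h1 : B *ᵥ x = fun _ => 1 := by
      rw [hx, Matrix.mulVec_mulVec, Matrix.mul_nonsing_inv B (isUnit_iff_ne_zero.mpr hdet.ne')]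
      ext k; simp [Matrix.one_mulVec]
    have h2 := congrFun h1 i
    simpa [Matrix.mulVec, dotProduct] using h2
  refine ⟨x, fun i => ?_, hBx⟩
  rcases lt_or_eq_of_le (hxnn i) with h | h
  · exact h
  · exfalso
    have h1 := hBx i
    have h2 : ∑ j ∈ Finset.univ.erase i, B i j * x j ≤ 0 :=
      Finset.sum_nonpos fun j hj =>
        mul_nonpos_of_nonpos_of_nonneg
          (hoff i j (Finset.ne_of_mem_erase hj).symm) (hxnn j)
    have h3 : ∑ j, B i j * x j ≤ 0 := by
      rw [← Finset.sum_erase_add _ _ (Finset.mem_univ i), ← h, mul_zero, add_zero]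
      exact h2
    linarith

-- AM-GM style helper
lemma amgm (a b vi vj : ℝ) (ha : 0 < a) (hb : 0 < b) :
    2 * (vi * vj) ≤ b / a * vi ^ 2 + a / b * vj ^ 2 := by
  rw [div_mul_eq_mul_div, div_mul_eq_mul_div,
    div_add_div _ _ ha.ne' hb.ne', le_div_iff₀ (by positivity)]
  nlinarith [sq_nonneg (b * vi - a * vj), mul_pos ha hb]

/-- If `B` is a nonsingular M-matrix (off-diagonal entries `≤ 0`, all principal minors
positive), then there exists a positive definite diagonal matrix `P` such that
`PB + BᵀP` is positive definite. -/
theorem stmt_1 (n : ℕ) (B : Matrix (Fin n) (Fin n) ℝ)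
    (hoff : ∀ i j : Fin n, i ≠ j → B i j ≤ 0)
    (hminor : ∀ S : Finset (Fin n),
      0 < (B.submatrix (fun a : {x // x ∈ S} => (a : Fin n))
        (fun a : {x // x ∈ S} => (a : Fin n))).det) :
    ∃ d : Fin n → ℝ, (∀ i, 0 < d i) ∧
      (Matrix.diagonal d * B + Bᵀ * Matrix.diagonal d).PosDef := by
  -- positive solutions for B and Bᵀ
  obtain ⟨x, hx, hBx⟩ := exPos n B hoff hminor
  have hoffT : ∀ i j : Fin n, i ≠ j → Bᵀ i j ≤ 0 := fun i j hij => hoff j i hij.symm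
  have hminorT : ∀ S : Finset (Fin n),
      0 < (Bᵀ.submatrix (fun a : {x // x ∈ S} => (a : Fin n))
        (fun a : {x // x ∈ S} => (a : Fin n))).det := by
    intro S
    have h1 : Bᵀ.submatrix (fun a : {x // x ∈ S} => (a : Fin n))
        (fun a : {x // x ∈ S} => (a : Fin n))
        = (B.submatrix (fun a : {x // x ∈ S} => (a : Fin n))
          (fun a : {x // x ∈ S} => (a : Fin n)))ᵀ := rfl
    rw [h1, det_transpose]
    exact hminor S
  obtain ⟨y, hy, hBy⟩ := exPos n Bᵀ hoffT hminorT
  have hByB : ∀ j, ∑ i, B i j * y i = 1 := by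
    intro j
    have := hBy j
    simpa [transpose_apply] using this
  refine ⟨fun i => y i / x i, fun i => div_pos (hy i) (hx i), ?_⟩
  set d : Fin n → ℝ := fun i => y i / x i with hd
  have hdpos : ∀ i, 0 < d i := fun i => div_pos (hy i) (hx i)
  have hdx : ∀ i, d i * x i = y i := fun i => div_mul_cancel₀ (y i) (hx i).ne'
  rw [posDef_iff_dotProduct_mulVec]
  constructor
  · -- Hermitian
    have h1 : (Matrix.diagonal d * B + Bᵀ * Matrix.diagonal d)ᵀ
        = Matrix.diagonal d * B + Bᵀ * Matrix.diagonal d := by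
      rw [transpose_add, transpose_mul, transpose_mul, transpose_transpose,
        diagonal_transpose, add_comm]
    rw [Matrix.IsHermitian, conjTranspose]
    convert h1 using 1
    ext i j
    simp
    ring
  · intro v hv
    have hstar : star v = v := by
      funext i; simp
    rw [hstar]
    -- entries of the matrix
    have hM : ∀ i j, (Matrix.diagonal d * B + Bᵀ * Matrix.diagonal d) i j
        = d i * B i j + B j i * d j := by
      intro i j
      rw [Matrix.add_apply, diagonal_mul, mul_diagonal, transpose_apply]
    -- the quadratic form
    have hQ : v ⬝ᵥ ((Matrix.diagonal d * B + Bᵀ * Matrix.diagonal d) *ᵥ v)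
        = ∑ i, ∑ j, 2 * (d i * B i j * v i * v j) := by
      rw [dotProduct]
      have h1 : ∀ i, ((Matrix.diagonal d * B + Bᵀ * Matrix.diagonal d) *ᵥ v) i
          = ∑ j, (d i * B i j + B j i * d j) * v j := by
        intro i
        rw [Matrix.mulVec, dotProduct]
        exact Finset.sum_congr rfl fun j _ => by rw [hM i j]
      calc ∑ i, v i * ((Matrix.diagonal d * B + Bᵀ * Matrix.diagonal d) *ᵥ v) i
          = ∑ i, ∑ j, v i * ((d i * B i j + B j i * d j) * v j) := by
            refine Finset.sum_congr rfl fun i _ => ?_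
            rw [h1 i, Finset.mul_sum]
        _ = ∑ i, ∑ j, (d i * B i j * v i * v j + d j * B j i * v i * v j) := by
            refine Finset.sum_congr rfl fun i _ => Finset.sum_congr rfl fun j _ => by ring
        _ = (∑ i, ∑ j, d i * B i j * v i * v j)
            + ∑ i, ∑ j, d j * B j i * v i * v j := by
            rw [← Finset.sum_add_distrib]
            exact Finset.sum_congr rfl fun i _ => by rw [← Finset.sum_add_distrib]
        _ = (∑ i, ∑ j, d i * B i j * v i * v j)
            + ∑ j, ∑ i, d j * B j i * v i * v j := by
            congr 1
            exact Finset.sum_comm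
        _ = ∑ i, ∑ j, 2 * (d i * B i j * v i * v j) := by
            rw [← Finset.sum_add_distrib]
            refine Finset.sum_congr rfl fun i _ => ?_
            rw [← Finset.sum_add_distrib]
            exact Finset.sum_congr rfl fun j _ => by ring
    -- termwise lower bound
    have hterm : ∀ i j, d i * B i j * (x j / x i * v i ^ 2 + x i / x j * v j ^ 2)
        ≤ 2 * (d i * B i j * v i * v j) := by
      intro i j
      by_cases hij : i = j
      · subst hij
        apply le_of_eq
        rw [div_self (hx i).ne']
        ring
      · have hc : d i * B i j ≤ 0 :=
          mul_nonpos_of_nonneg_of_nonpos (hdpos i).le (hoff i j hij)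
        have hE := amgm (x i) (x j) (v i) (v j) (hx i) (hx j)
        calc d i * B i j * (x j / x i * v i ^ 2 + x i / x j * v j ^ 2)
            ≤ d i * B i j * (2 * (v i * v j)) := mul_le_mul_of_nonpos_left hE hc
          _ = 2 * (d i * B i j * v i * v j) := by ring
    -- lower bound sum value
    have hlow : (∑ i, ∑ j, d i * B i j * (x j / x i * v i ^ 2 + x i / x j * v j ^ 2))
        ≤ v ⬝ᵥ ((Matrix.diagonal d * B + Bᵀ * Matrix.diagonal d) *ᵥ v) := by
      rw [hQ]
      exact Finset.sum_le_sum fun i _ => Finset.sum_le_sum fun j _ => hterm i j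
    -- compute the lower bound
    have hsplit : ∀ i j, d i * B i j * (x j / x i * v i ^ 2 + x i / x j * v j ^ 2)
        = (d i * v i ^ 2 / x i) * (B i j * x j)
          + (v j ^ 2 / x j) * (B i j * y i) := by
      intro i j
      rw [← hdx i]
      field_simp
    have hR : (∑ i, ∑ j, d i * B i j * (x j / x i * v i ^ 2 + x i / x j * v j ^ 2))
        = (∑ i, d i * v i ^ 2 / x i) + ∑ j, v j ^ 2 / x j := by
      calc (∑ i, ∑ j, d i * B i j * (x j / x i * v i ^ 2 + x i / x j * v j ^ 2))
          = ∑ i, ∑ j, ((d i * v i ^ 2 / x i) * (B i j * x j)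
            + (v j ^ 2 / x j) * (B i j * y i)) := by
            exact Finset.sum_congr rfl fun i _ => Finset.sum_congr rfl fun j _ => hsplit i j
        _ = (∑ i, ∑ j, (d i * v i ^ 2 / x i) * (B i j * x j))
            + ∑ i, ∑ j, (v j ^ 2 / x j) * (B i j * y i) := by
            rw [← Finset.sum_add_distrib]
            exact Finset.sum_congr rfl fun i _ => by rw [← Finset.sum_add_distrib]
        _ = (∑ i, d i * v i ^ 2 / x i) + ∑ j, v j ^ 2 / x j := by
            congr 1
            · refine Finset.sum_congr rfl fun i _ => ?_
              rw [← Finset.mul_sum, hBx i, mul_one]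
            · rw [Finset.sum_comm]
              refine Finset.sum_congr rfl fun j _ => ?_
              rw [← Finset.mul_sum, hByB j, mul_one]
    -- positivity
    have hS1 : 0 ≤ ∑ i, d i * v i ^ 2 / x i :=
      Finset.sum_nonneg fun i _ =>
        div_nonneg (mul_nonneg (hdpos i).le (sq_nonneg _)) (hx i).le
    have hS2 : 0 < ∑ j, v j ^ 2 / x j := by
      obtain ⟨k, hk⟩ := Function.ne_iff.mp hv
      refine Finset.sum_pos' (fun j _ => div_nonneg (sq_nonneg _) (hx j).le)
        ⟨k, Finset.mem_univ k, ?_⟩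
      have hvk : v k ≠ 0 := by simpa using hk
      exact div_pos (lt_of_le_of_ne (sq_nonneg _) (Ne.symm (pow_ne_zero 2 hvk))) (hx k)
    calc (0:ℝ) < (∑ i, d i * v i ^ 2 / x i) + ∑ j, v j ^ 2 / x j := by linarith
      _ = ∑ i, ∑ j, d i * B i j * (x j / x i * v i ^ 2 + x i / x j * v j ^ 2) := hR.symm
      _ ≤ _ := hlow
end

section
/- Let c > 0 and φ̲ > 0, and define φ : (0,∞) → ℝ by φ(t) = (1/t)e^{−ct} + φ̲. Then φ(t) > φ̲ for all t > 0, φ is strictly decreasing, φ(t) → ∞ as t → 0⁺, φ(t) → φ̲ as t → ∞, and the function t ↦ φ′(t)/φ(t)³ is bounded on (0,∞). -/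
open Filter Topology

/-- For `c > 0` and `φ̲ > 0`, the funnel function `φ(t) = (1/t)e^{-ct} + φ̲` satisfies
`φ(t) > φ̲` on `(0,∞)`, is strictly decreasing there, tends to `∞` as `t → 0⁺`, tends to
`φ̲` as `t → ∞`, and `φ′/φ³` is bounded on `(0,∞)`. -/
theorem stmt_14 (c φlow : ℝ) (hc : 0 < c) (hφlow : 0 < φlow) :
    (∀ t > (0 : ℝ), φlow < (1 / t) * Real.exp (-c * t) + φlow) ∧
    StrictAntiOn (fun t : ℝ => (1 / t) * Real.exp (-c * t) + φlow) (Set.Ioi 0) ∧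
    Tendsto (fun t : ℝ => (1 / t) * Real.exp (-c * t) + φlow)
      (nhdsWithin 0 (Set.Ioi 0)) atTop ∧
    Tendsto (fun t : ℝ => (1 / t) * Real.exp (-c * t) + φlow) atTop (nhds φlow) ∧
    ∃ M : ℝ, ∀ t > (0 : ℝ),
      |deriv (fun t : ℝ => (1 / t) * Real.exp (-c * t) + φlow) t /
        ((1 / t) * Real.exp (-c * t) + φlow) ^ 3| ≤ M := by
  refine ⟨?_, ?_, ?_, ?_, ?_⟩
  · intro t ht
    have h1 : 0 < (1 / t) * Real.exp (-c * t) := by positivity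
    linarith
  · intro x hx y hy hxy
    simp only [Set.mem_Ioi] at hx hy
    have h1 : 1 / y < 1 / x := one_div_lt_one_div_of_lt hx hxy
    have h2 : Real.exp (-c * y) < Real.exp (-c * x) := by
      apply Real.exp_lt_exp.mpr; nlinarith
    have := mul_lt_mul'' h1 h2 (by positivity) (Real.exp_pos _).le
    simp only []
    linarith
  · have h1 : Tendsto (fun t : ℝ => 1 / t) (𝓝[>] (0:ℝ)) atTop := by
      simpa only [one_div] using tendsto_inv_nhdsGT_zero
    have h2 : Tendsto (fun t : ℝ => Real.exp (-c * t)) (𝓝[>] (0:ℝ)) (𝓝 1) := by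
      have h3 : Continuous (fun t : ℝ => Real.exp (-c * t)) :=
        Real.continuous_exp.comp (continuous_const.mul continuous_id)
      have h4 := h3.tendsto (0:ℝ)
      simp only [mul_zero] at h4
      rw [Real.exp_zero] at h4
      exact h4.mono_left nhdsWithin_le_nhds
    exact tendsto_atTop_add_const_right _ φlow (h1.atTop_mul_pos one_pos h2)
  · have h1 : Tendsto (fun t : ℝ => 1 / t) atTop (𝓝 (0:ℝ)) := by
      simpa only [one_div] using tendsto_inv_atTop_zero
    have h2 : Tendsto (fun t : ℝ => Real.exp (-c * t)) atTop (𝓝 (0:ℝ)) := by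
      apply Real.tendsto_exp_atBot.comp
      exact (tendsto_const_mul_atBot_of_neg (neg_lt_zero.mpr hc)).mpr tendsto_id
    have := (h1.mul h2).add_const φlow
    simpa using this
  · -- boundedness of φ'/φ³
    have hderiv : ∀ t : ℝ, 0 < t →
        deriv (fun t : ℝ => (1 / t) * Real.exp (-c * t) + φlow) t
          = -(Real.exp (-c * t) / t) * (1 / t + c) := by
      intro t ht
      have h1 : HasDerivAt (fun t : ℝ => 1 / t) (-(1 / t ^ 2)) t := by
        simpa only [one_div] using hasDerivAt_inv ht.ne'
      have h2 : HasDerivAt (fun t : ℝ => Real.exp (-c * t))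
          (Real.exp (-c * t) * (-c * 1)) t := ((hasDerivAt_id t).const_mul (-c)).exp
      have h3 := (h1.mul h2).add_const φlow
      have h4 : -(1 / t ^ 2) * Real.exp (-c * t) + 1 / t * (Real.exp (-c * t) * (-c * 1))
          = -(Real.exp (-c * t) / t) * (1 / t + c) := by
        field_simp; ring
      rw [← h4]
      exact h3.deriv
    refine ⟨Real.exp (2 * c) * (1 + c) + (1 + c) / φlow ^ 3, ?_⟩
    intro t ht
    set a : ℝ := (1 / t) * Real.exp (-c * t) with ha
    have hapos : 0 < a := by positivity
    have hφpos : 0 < a + φlow := by linarith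
    have hφ3 : 0 < (a + φlow) ^ 3 := by positivity
    have hnum : 0 < Real.exp (-c * t) / t * (1 / t + c) := by positivity
    rw [hderiv t ht]
    have habs : |(-(Real.exp (-c * t) / t) * (1 / t + c)) / (a + φlow) ^ 3|
        = (Real.exp (-c * t) / t * (1 / t + c)) / (a + φlow) ^ 3 := by
      rw [abs_div, abs_of_pos hφ3, neg_mul, abs_neg, abs_of_pos hnum]
    rw [habs, div_le_iff₀ hφ3]
    have haa : a = Real.exp (-c * t) / t := by rw [ha]; ring
    have hM1 : (0:ℝ) ≤ Real.exp (2 * c) * (1 + c) := by positivity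
    have hM2 : (0:ℝ) ≤ (1 + c) / φlow ^ 3 := by positivity
    rcases le_total t 1 with h1 | h1
    · -- small t : num ≤ exp(2c)(1+c) * a³ ≤ exp(2c)(1+c) * φ³
      have he2 : 1 ≤ Real.exp (2 * c) * Real.exp (-c * t) ^ 2 := by
        have : Real.exp (2 * c) * Real.exp (-c * t) ^ 2 = Real.exp (2 * c + (-c * t + -c * t)) := by
          rw [sq, ← Real.exp_add, ← Real.exp_add]
        rw [this]
        apply Real.one_le_exp
        nlinarith
      have hkey2 : Real.exp (-c * t) ≤ Real.exp (2 * c) * Real.exp (-c * t) ^ 3 := by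
        nlinarith [Real.exp_pos (-c * t)]
      have ht2 : (0:ℝ) < t ^ 2 := by positivity
      have e1 : 1 / t ≤ 1 / t ^ 2 := one_div_le_one_div_of_le (by positivity) (by nlinarith)
      have ht1 : t ^ 2 ≤ 1 := by nlinarith [mul_le_mul h1 h1 ht.le zero_le_one]
      have e2 : c ≤ c / t ^ 2 := by rw [le_div_iff₀ ht2]; nlinarith
      have h5 : 1 / t + c ≤ (1 + c) / t ^ 2 := by
        have : (1 + c) / t ^ 2 = 1 / t ^ 2 + c / t ^ 2 := by ring
        linarith [this.ge, e1, e2]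
      have key : Real.exp (-c * t) / t * (1 / t + c)
          ≤ Real.exp (2 * c) * (1 + c) * a ^ 3 := by
        rw [haa]
        calc Real.exp (-c * t) / t * (1 / t + c)
            ≤ Real.exp (-c * t) / t * ((1 + c) / t ^ 2) :=
              mul_le_mul_of_nonneg_left h5 (by positivity)
          _ = (1 + c) * Real.exp (-c * t) / t ^ 3 := by ring
          _ ≤ (1 + c) * (Real.exp (2 * c) * Real.exp (-c * t) ^ 3) / t ^ 3 := by
              gcongr
          _ = Real.exp (2 * c) * (1 + c) * (Real.exp (-c * t) / t) ^ 3 := by ring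
      have hmono : a ^ 3 ≤ (a + φlow) ^ 3 := by
        apply pow_le_pow_left₀ hapos.le (by linarith)
      have e3 := mul_le_mul_of_nonneg_left hmono hM1
      have e4 := mul_nonneg hM2 hφ3.le
      calc Real.exp (-c * t) / t * (1 / t + c)
          ≤ Real.exp (2 * c) * (1 + c) * a ^ 3 := key
        _ ≤ (Real.exp (2 * c) * (1 + c) + (1 + c) / φlow ^ 3) * (a + φlow) ^ 3 := by
            nlinarith
    · -- large t : num ≤ (1+c), φ³ ≥ φlow³
      have ha1 : a ≤ 1 := by
        rw [haa]
        have he : Real.exp (-c * t) ≤ 1 := by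
          apply Real.exp_le_one_iff.mpr; nlinarith
        rw [div_le_one ht]
        linarith
      have key : Real.exp (-c * t) / t * (1 / t + c) ≤ 1 + c := by
        rw [← haa]
        have h5 : 1 / t + c ≤ 1 + c := by
          have : 1 / t ≤ 1 := by rw [div_le_one ht]; exact h1
          linarith
        nlinarith
      have hmono : φlow ^ 3 ≤ (a + φlow) ^ 3 := by
        apply pow_le_pow_left₀ hφlow.le (by linarith)
      have hφ3low : (0:ℝ) < φlow ^ 3 := by positivity
      have heq : (1 + c) = (1 + c) / φlow ^ 3 * φlow ^ 3 := by field_simp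
      have e3 := mul_le_mul_of_nonneg_left hmono hM2
      have e4 := mul_nonneg hM1 hφ3.le
      calc Real.exp (-c * t) / t * (1 / t + c)
          ≤ 1 + c := key
        _ = (1 + c) / φlow ^ 3 * φlow ^ 3 := heq
        _ ≤ (1 + c) / φlow ^ 3 * (a + φlow) ^ 3 := e3
        _ ≤ (Real.exp (2 * c) * (1 + c) + (1 + c) / φlow ^ 3) * (a + φlow) ^ 3 := by
            have hdist : (Real.exp (2 * c) * (1 + c) + (1 + c) / φlow ^ 3) * (a + φlow) ^ 3
                = Real.exp (2 * c) * (1 + c) * (a + φlow) ^ 3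
                  + (1 + c) / φlow ^ 3 * (a + φlow) ^ 3 := by ring
            linarith [e4]
end
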